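/- Let a, b ∈ L(H) be projections of the same finite rank r ≥ 1. Then there exist finitely many projections p₁, …, p_m ∈ L(H), each of rank r, such that b = w_m ⋯ w₁ a w₁ ⋯ w_m, where w_i := 2p_i − 1; that is, the composition of the Peirce reflections x ↦ (2p_i − 1)x(2p_i − 1) maps a to b. In other words, the group generated by the Peirce reflections at rank-r projections acts transitively on the set of rank-r projections. -/

import Mathlib

set_option linter.unusedSectionVars false
set_option maxHeartbeats 1000000

open Submodule FiniteDimensional

variable {H : Type*} [NormedAddCommGroup H] [InnerProductSpace ℂ H] [CompleteSpace H]

local notation "⟪" x ", " y "⟫" => @inner ℂ _ _ x y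





-- uniqueness of self-adjoint idempotent with given range
lemma proj_unique {e f : H →L[ℂ] H} (he : IsSelfAdjoint e) (he2 : e * e = e)
    (hf : IsSelfAdjoint f) (hf2 : f * f = f)
    (h : LinearMap.range (e : H →ₗ[ℂ] H) = LinearMap.range (f : H →ₗ[ℂ] H)) : e = f := by
  have key : ∀ (u v : H →L[ℂ] H), u * u = u → v * v = v →
      LinearMap.range (u : H →ₗ[ℂ] H) = LinearMap.range (v : H →ₗ[ℂ] H) → u * v = v := by
    intro u v hu hv huv
    ext x
    have hvx : v x ∈ LinearMap.range (u : H →ₗ[ℂ] H) := by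
      rw [huv]; exact LinearMap.mem_range_self _ x
    obtain ⟨z, hz⟩ := hvx
    have : u (u z) = u z := by
      have := congrArg (fun w => w z) hu
      simpa using this
    simpa [ContinuousLinearMap.mul_apply, show u z = v x from hz] using this
  have h1 : f * e = e := key f e hf2 he2 h.symm
  have h2 : e * f = f := key e f he2 hf2 h
  have := congrArg star h1
  rw [star_mul, he.star_eq, hf.star_eq, h2] at this
  exact this.symm


lemma span_sup_orth (M : Submodule ℂ H) {x : H} (hx : x ∈ M) (hx1 : ‖x‖ = 1) :
    (ℂ ∙ x) ⊔ (M ⊓ (ℂ ∙ x)ᗮ) = M := by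
  apply le_antisymm
  · exact sup_le ((Submodule.span_singleton_le_iff_mem x M).mpr hx) inf_le_left
  · intro m hm
    have hxx : ⟪x, x⟫ = 1 := by
      rw [inner_self_eq_norm_sq_to_K, hx1]; norm_num
    have h1 : ⟪x, m⟫ • x ∈ ℂ ∙ x := smul_mem _ _ (mem_span_singleton_self x)
    have horth : m - ⟪x, m⟫ • x ∈ (ℂ ∙ x)ᗮ := by
      rw [Submodule.mem_orthogonal_singleton_iff_inner_right]
      rw [inner_sub_right, inner_smul_right, hxx, mul_one, sub_self]
    have h2 : m - ⟪x, m⟫ • x ∈ M ⊓ (ℂ ∙ x)ᗮ :=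
      Submodule.mem_inf.mpr ⟨sub_mem hm (smul_mem _ _ hx), horth⟩
    have := Submodule.add_mem_sup h1 h2
    simpa using this

lemma finrank_orth (M : Submodule ℂ H) [FiniteDimensional ℂ M] {x : H} (hx : x ∈ M)
    (hx1 : ‖x‖ = 1) :
    Module.finrank ℂ ↥(M ⊓ (ℂ ∙ x)ᗮ) + 1 = Module.finrank ℂ M := by
  have hx0 : x ≠ 0 := by intro h; rw [h, norm_zero] at hx1; norm_num at hx1
  haveI : FiniteDimensional ℂ ↥(M ⊓ (ℂ ∙ x)ᗮ) := Submodule.finiteDimensional_of_le inf_le_left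
  haveI : FiniteDimensional ℂ ↥(ℂ ∙ x) := inferInstance
  have hd := Submodule.finrank_sup_add_finrank_inf_eq (ℂ ∙ x) (M ⊓ (ℂ ∙ x)ᗮ)
  have hbot : (ℂ ∙ x) ⊓ (M ⊓ (ℂ ∙ x)ᗮ) = ⊥ := by
    rw [eq_bot_iff]
    intro z hz
    have : z ∈ (ℂ ∙ x) ⊓ (ℂ ∙ x)ᗮ := ⟨hz.1, hz.2.2⟩
    rwa [Submodule.inf_orthogonal_eq_bot] at this
  rw [span_sup_orth M hx hx1, hbot, finrank_bot, add_zero, finrank_span_singleton hx0] at hd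
  omega






lemma exists_unit (M : Submodule ℂ H) (hM : M ≠ ⊥) : ∃ x ∈ M, ‖x‖ = 1 := by
  obtain ⟨x0, hx0M, hx0⟩ := Submodule.exists_mem_ne_zero_of_ne_bot hM
  refine ⟨‖x0‖⁻¹ • x0, smul_mem _ _ hx0M, ?_⟩
  rw [norm_smul, norm_inv, norm_norm, inv_mul_cancel₀ (norm_ne_zero_iff.mpr hx0)]

lemma exists_max (M N : Submodule ℂ H) [FiniteDimensional ℂ M] [FiniteDimensional ℂ N]
    (hM : M ≠ ⊥) (hN : N ≠ ⊥) :
    ∃ x ∈ M, ∃ y ∈ N, ‖x‖ = 1 ∧ ‖y‖ = 1 ∧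
      ∀ x' ∈ M, ∀ y' ∈ N, ‖x'‖ = 1 → ‖y'‖ = 1 →
        (⟪x', y'⟫).re ≤ (⟪x, y⟫).re := by
  have S1 : Set H := Subtype.val '' (Metric.sphere (0 : M) 1)
  set S : Set (H × H) :=
    (Subtype.val '' (Metric.sphere (0 : M) 1)) ×ˢ (Subtype.val '' (Metric.sphere (0 : N) 1))
    with hS
  have hcs : ∀ (P : Submodule ℂ H) (_ : FiniteDimensional ℂ P),
      IsCompact (Subtype.val '' (Metric.sphere (0 : P) 1)) := by
    intro P hP
    exact (isCompact_sphere (0 : P) 1).image continuous_subtype_val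
  have hcomp : IsCompact S := (hcs M ‹_›).prod (hcs N ‹_›)
  have hmem : ∀ (P : Submodule ℂ H) (z : H), z ∈ Subtype.val '' (Metric.sphere (0 : P) 1) ↔
      z ∈ P ∧ ‖z‖ = 1 := by
    intro P z
    constructor
    · rintro ⟨w, hw, rfl⟩
      simp only [Metric.mem_sphere, dist_zero_right] at hw
      exact ⟨w.2, by simpa using congrArg id hw⟩
    · rintro ⟨hzP, hz1⟩
      exact ⟨⟨z, hzP⟩, by simp [Metric.mem_sphere, dist_zero_right, hz1], rfl⟩
  have hne : S.Nonempty := by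
    obtain ⟨x, hxM, hx1⟩ := exists_unit M hM
    obtain ⟨y, hyN, hy1⟩ := exists_unit N hN
    exact ⟨(x, y), Set.mem_prod.mpr ⟨(hmem M x).mpr ⟨hxM, hx1⟩, (hmem N y).mpr ⟨hyN, hy1⟩⟩⟩
  have hcont : Continuous fun z : H × H => (⟪z.1, z.2⟫).re :=
    Complex.continuous_re.comp (continuous_fst.inner continuous_snd)
  obtain ⟨z, hzS, hzmax⟩ := hcomp.exists_isMaxOn hne hcont.continuousOn
  obtain ⟨hz1, hz2⟩ := Set.mem_prod.mp hzS
  rw [hmem] at hz1 hz2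
  refine ⟨z.1, hz1.1, z.2, hz2.1, hz1.2, hz2.2, ?_⟩
  intro x' hx' y' hy' hx'1 hy'1
  have : (x', y') ∈ S := Set.mem_prod.mpr ⟨(hmem M x').mpr ⟨hx', hx'1⟩, (hmem N y').mpr ⟨hy', hy'1⟩⟩
  exact hzmax this






section Max

variable {M N : Submodule ℂ H} {x y : H}

lemma max_nonneg (hxM : x ∈ M) (hyN : y ∈ N) (hx1 : ‖x‖ = 1) (hy1 : ‖y‖ = 1)
    (hmax : ∀ x' ∈ M, ∀ y' ∈ N, ‖x'‖ = 1 → ‖y'‖ = 1 → (⟪x', y'⟫).re ≤ (⟪x, y⟫).re) :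
    0 ≤ (⟪x, y⟫).re := by
  have := hmax x hxM (-y) (neg_mem hyN) hx1 (by rw [norm_neg]; exact hy1)
  rw [inner_neg_right] at this
  simp only [Complex.neg_re] at this
  linarith

lemma max_real (hxM : x ∈ M) (hyN : y ∈ N) (hx1 : ‖x‖ = 1) (hy1 : ‖y‖ = 1)
    (hmax : ∀ x' ∈ M, ∀ y' ∈ N, ‖x'‖ = 1 → ‖y'‖ = 1 → (⟪x', y'⟫).re ≤ (⟪x, y⟫).re) :
    ⟪x, y⟫ = ((⟪x, y⟫).re : ℂ) := by
  set t := ⟪x, y⟫ with ht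
  by_cases h0 : t = 0
  · rw [h0]; simp
  · have habs : ‖t‖ ≤ t.re := by
      set α : ℂ := (starRingEnd ℂ) t / ‖t‖ with hα
      have hαn : ‖α‖ = 1 := by
        rw [hα]
        simp [norm_div, Complex.norm_conj,
          div_self (norm_ne_zero_iff.mpr h0)]
      have hy' : ‖α • y‖ = 1 := by rw [norm_smul, hαn, one_mul, hy1]
      have := hmax x hxM (α • y) (smul_mem _ _ hyN) hx1 hy'
      rw [inner_smul_right] at this
      have hcalc : α * t = (‖t‖ : ℂ) := by
        rw [hα, div_mul_eq_mul_div]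
        rw [Complex.conj_mul']
        rw [sq, mul_div_assoc, div_self (by exact_mod_cast norm_ne_zero_iff.mpr h0), mul_one]
      rw [hcalc] at this
      simpa using this
    have hre : t.re = ‖t‖ := le_antisymm (Complex.re_le_norm t) habs
    have him : t.im = 0 := by
      have h1 := Complex.sq_norm t
      rw [Complex.normSq_apply, ← hre, pow_two] at h1
      have h2 : t.im * t.im = 0 := by linarith
      exact mul_self_eq_zero.mp h2
    exact Complex.ext (by simp) (by simp [him])

lemma principal_orth (hxM : x ∈ M) (hyN : y ∈ N) (hx1 : ‖x‖ = 1) (hy1 : ‖y‖ = 1)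
    (hmax : ∀ x' ∈ M, ∀ y' ∈ N, ‖x'‖ = 1 → ‖y'‖ = 1 → (⟪x', y'⟫).re ≤ (⟪x, y⟫).re)
    {m : H} (hmM : m ∈ M) (hxm : ⟪x, m⟫ = 0) : ⟪m, y⟫ = 0 := by
  -- reduce to unit m
  rcases eq_or_ne m 0 with rfl | hm0
  · simp
  by_contra hδ
  set c := (⟪x, y⟫).re with hc
  have hc0 : 0 ≤ c := max_nonneg hxM hyN hx1 hy1 hmax
  set δ := ⟪m, y⟫ with hδdef
  set d := ‖δ‖ with hd
  have hd0 : 0 < d := by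
    rw [hd]; exact norm_pos_iff.mpr hδ
  have hmn : 0 < ‖m‖ := norm_pos_iff.mpr hm0
  set ε : ℝ := d / ((c + 1) * (1 + ‖m‖ ^ 2)) with hε
  have hε0 : 0 < ε := by positivity
  set s : ℂ := (ε : ℂ) * (δ / d) with hs
  have hsabs : ‖s‖ = ε := by
    have h1 : ‖(ε : ℂ)‖ = ε := by rw [Complex.norm_real, Real.norm_eq_abs, abs_of_pos hε0]
    have h2 : ‖δ / (d : ℂ)‖ = 1 := by
      rw [norm_div, Complex.norm_real, Real.norm_eq_abs, abs_of_pos hd0,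
        ← hd, div_self (ne_of_gt hd0)]
    rw [hs, norm_mul, h1, h2, mul_one]
  have hinner0 : ⟪x, s • m⟫ = 0 := by rw [inner_smul_right, hxm, mul_zero]
  set v := x + s • m with hv
  have hnv : ‖v‖ ^ 2 = 1 + (ε * ‖m‖) ^ 2 := by
    rw [hv, @norm_add_sq ℂ, hinner0, hx1]
    simp [norm_smul, hsabs, mul_pow]
  have hvpos : 0 < ‖v‖ := by
    have : (0:ℝ) < ‖v‖ ^ 2 := by rw [hnv]; positivity
    nlinarith [norm_nonneg v]
  set x' := (‖v‖⁻¹ : ℝ) • v with hx'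
  have hx'M : x' ∈ M := smul_mem _ _ (add_mem hxM (smul_mem _ _ hmM))
  have hx'1 : ‖x'‖ = 1 := by
    rw [hx', norm_smul, norm_inv, norm_norm, inv_mul_cancel₀ (ne_of_gt hvpos)]
  have hconj : (starRingEnd ℂ) s * δ = ((ε * d : ℝ) : ℂ) := by
    rw [hs, map_mul, map_div₀, Complex.conj_ofReal, Complex.conj_ofReal]
    rw [mul_assoc, div_mul_eq_mul_div, Complex.conj_mul', ← hd]
    push_cast
    rw [sq, mul_div_assoc, div_self (by exact_mod_cast ne_of_gt hd0), mul_one]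
  have hiv : ⟪v, y⟫ = ((c + ε * d : ℝ) : ℂ) := by
    rw [hv, inner_add_left, inner_smul_left, hconj,
      max_real hxM hyN hx1 hy1 hmax, ← hc]
    push_cast
    ring
  have hre : (⟪x', y⟫).re = ‖v‖⁻¹ * (c + ε * d) := by
    have h1 : ⟪x', y⟫ = ((‖v‖⁻¹ : ℝ) : ℂ) * ⟪v, y⟫ := by
      rw [hx', RCLike.real_smul_eq_coe_smul (K := ℂ), inner_smul_left]
      simp
    rw [h1, hiv, ← Complex.ofReal_mul, Complex.ofReal_re]
  have hle : c + ε * d ≤ c * ‖v‖ := by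
    have := hmax x' hx'M y hyN hx'1 hy1
    rw [hre] at this
    have h2 : ‖v‖⁻¹ * (c + ε * d) * ‖v‖ ≤ c * ‖v‖ :=
      mul_le_mul_of_nonneg_right this (le_of_lt hvpos)
    calc c + ε * d = ‖v‖⁻¹ * (c + ε * d) * ‖v‖ := by
          field_simp
        _ ≤ c * ‖v‖ := h2
  have hnn : 0 ≤ c + ε * d := by positivity
  have key : (c + ε * d) ^ 2 ≤ c ^ 2 * (1 + (ε * ‖m‖) ^ 2) := by
    have := mul_self_le_mul_self hnn hle
    calc (c + ε * d) ^ 2 = (c + ε * d) * (c + ε * d) := sq (c + ε*d) ▸ by ring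
      _ ≤ (c * ‖v‖) * (c * ‖v‖) := this
      _ = c ^ 2 * ‖v‖ ^ 2 := by ring
      _ = c ^ 2 * (1 + (ε * ‖m‖) ^ 2) := by rw [hnv]
  have hεd : ε * ((c + 1) * (1 + ‖m‖ ^ 2)) = d := by
    rw [hε]
    field_simp
  have h2 : 2 * c * ε * d = 2 * c * ε * ε * ((c + 1) * (1 + ‖m‖ ^ 2)) := by
    rw [← hεd]; ring
  have h3 : ε ^ 2 * (2 * c * ((c + 1) * (1 + ‖m‖ ^ 2)) + d ^ 2 - c ^ 2 * ‖m‖ ^ 2) ≤ 0 := by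
    nlinarith [key, h2]
  have h4 : 0 < 2 * c * ((c + 1) * (1 + ‖m‖ ^ 2)) + d ^ 2 - c ^ 2 * ‖m‖ ^ 2 := by
    nlinarith [hc0, hd0, sq_nonneg ‖m‖, mul_nonneg (mul_nonneg hc0 hc0) (sq_nonneg ‖m‖),
      mul_nonneg hc0 (sq_nonneg ‖m‖)]
  exact absurd h3 (not_le.mpr (mul_pos (pow_pos hε0 2) h4))

end Max


set_option maxHeartbeats 1000000




lemma apply_eq_zero_of_orth {p : H →L[ℂ] H} (hsa : IsSelfAdjoint p) (hidem : p * p = p)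
    {v : H} (hv : ∀ w ∈ LinearMap.range (p : H →ₗ[ℂ] H), ⟪w, v⟫ = 0) : p v = 0 := by
  have hpp : p (p v) = p v := by
    have := congrArg (fun f : H →L[ℂ] H => f v) hidem
    simpa using this
  have h1 : ⟪p v, p v⟫ = ⟪v, p (p v)⟫ := hsa.isSymmetric v (p v)
  rw [hpp] at h1
  have h2 : ⟪v, p v⟫ = 0 := by
    rw [← inner_conj_symm]
    rw [hv (p v) (LinearMap.mem_range_self _ v)]
    simp
  rw [h2] at h1
  exact inner_self_eq_zero.mp h1

lemma range_apply_self {p : H →L[ℂ] H} (hidem : p * p = p)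
    {w : H} (hw : w ∈ LinearMap.range (p : H →ₗ[ℂ] H)) : p w = w := by
  obtain ⟨z, rfl⟩ := hw
  have := congrArg (fun f : H →L[ℂ] H => f z) hidem
  simpa using this

lemma key_induction (r : ℕ) :
    ∀ M N : Submodule ℂ H, FiniteDimensional ℂ ↥M → FiniteDimensional ℂ ↥N →
    Module.finrank ℂ ↥M = r → Module.finrank ℂ ↥N = r →
    ∃ p : H →L[ℂ] H, IsSelfAdjoint p ∧ p * p = p ∧
      LinearMap.range (p : H →ₗ[ℂ] H) ≤ M ⊔ N ∧ Module.finrank ℂ ↥(LinearMap.range (p : H →ₗ[ℂ] H)) = r ∧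
      Submodule.map ((2 • p - 1 : H →L[ℂ] H) : H →ₗ[ℂ] H) M = N := by
  induction r with
  | zero =>
    intro M N hMf hNf hMr hNr
    refine ⟨0, by simp [IsSelfAdjoint], by simp, ?_, ?_, ?_⟩
    · rw [show LinearMap.range ((0 : H →L[ℂ] H) : H →ₗ[ℂ] H) = ⊥ from LinearMap.range_eq_bot.mpr rfl]
      exact bot_le
    · rw [show LinearMap.range ((0 : H →L[ℂ] H) : H →ₗ[ℂ] H) = ⊥ from LinearMap.range_eq_bot.mpr rfl]
      exact finrank_bot ℂ H
    · have hM : M = ⊥ := by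
        haveI := hMf
        exact Submodule.finrank_eq_zero.mp hMr
      have hN : N = ⊥ := by
        haveI := hNf
        exact Submodule.finrank_eq_zero.mp hNr
      rw [hM, hN, Submodule.map_bot]
  | succ r IH =>
    intro M N hMf hNf hMr hNr
    haveI := hMf; haveI := hNf
    have hMbot : M ≠ ⊥ := by
      intro h; rw [h, finrank_bot] at hMr; omega
    have hNbot : N ≠ ⊥ := by
      intro h; rw [h, finrank_bot] at hNr; omega
    obtain ⟨x, hxM, y, hyN, hx1, hy1, hmax⟩ := exists_max M N hMbot hNbot
    set c : ℝ := (⟪x, y⟫).re with hc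
    have hc0 : 0 ≤ c := max_nonneg hxM hyN hx1 hy1 hmax
    have hreal : ⟪x, y⟫ = (c : ℂ) := max_real hxM hyN hx1 hy1 hmax
    -- the symmetric max property
    have hmax' : ∀ y' ∈ N, ∀ x' ∈ M, ‖y'‖ = 1 → ‖x'‖ = 1 →
        (⟪y', x'⟫).re ≤ (⟪y, x⟫).re := by
      intro y' hy' x' hx' hy'1 hx'1
      have h1 : (⟪y', x'⟫).re = (⟪x', y'⟫).re := by
        rw [← inner_conj_symm y' x', Complex.conj_re]
      have h2 : (⟪y, x⟫).re = (⟪x, y⟫).re := by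
        rw [← inner_conj_symm y x, Complex.conj_re]
      rw [h1, h2]
      exact hmax x' hx' y' hy' hx'1 hy'1
    set M' := M ⊓ (ℂ ∙ x)ᗮ with hM'
    set N' := N ⊓ (ℂ ∙ y)ᗮ with hN'
    haveI : FiniteDimensional ℂ ↥M' := Submodule.finiteDimensional_of_le inf_le_left
    haveI : FiniteDimensional ℂ ↥N' := Submodule.finiteDimensional_of_le inf_le_left
    have hM'r : Module.finrank ℂ ↥M' = r := by
      have := finrank_orth M hxM hx1; rw [← hM'] at this; omega
    have hN'r : Module.finrank ℂ ↥N' = r := by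
      have := finrank_orth N hyN hy1; rw [← hN'] at this; omega
    -- orthogonality facts
    have hM'x : ∀ m ∈ M', ⟪x, m⟫ = 0 := fun m hm =>
      Submodule.mem_orthogonal_singleton_iff_inner_right.mp hm.2
    have hN'y : ∀ n ∈ N', ⟪y, n⟫ = 0 := fun n hn =>
      Submodule.mem_orthogonal_singleton_iff_inner_right.mp hn.2
    have hM'y : ∀ m ∈ M', ⟪y, m⟫ = 0 := by
      intro m hm
      have := principal_orth hxM hyN hx1 hy1 hmax hm.1 (hM'x m hm)
      rw [← inner_conj_symm, this, map_zero]
    have hN'x : ∀ n ∈ N', ⟪x, n⟫ = 0 := by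
      intro n hn
      have := principal_orth hyN hxM hy1 hx1 hmax' hn.1 (hN'y n hn)
      rw [← inner_conj_symm, this, map_zero]
    obtain ⟨p', hp'sa, hp'idem, hp'le, hp'rank, hp'map⟩ := IH M' N' ‹_› ‹_› hM'r hN'r
    -- the vector u = x + y
    set u : H := x + y with hu
    have hxu : ⟪x, u⟫ = ((1 + c : ℝ) : ℂ) := by
      rw [hu, inner_add_right, hreal, inner_self_eq_norm_sq_to_K, hx1]
      push_cast; ring
    have hu0 : u ≠ 0 := by
      intro h
      rw [h, inner_zero_right] at hxu
      have : (1 + c : ℝ) = 0 := by exact_mod_cast hxu.symm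
      linarith
    -- u is orthogonal to M' ⊔ N'
    have huMN : ∀ w ∈ M' ⊔ N', ⟪u, w⟫ = 0 := by
      intro w hw
      obtain ⟨m, hm, n, hn, rfl⟩ := Submodule.mem_sup.mp hw
      rw [inner_add_right, hu, inner_add_left, inner_add_left,
        hM'x m hm, hM'y m hm, hN'x n hn, hN'y n hn]
      ring
    have hup' : ∀ w ∈ LinearMap.range (p' : H →ₗ[ℂ] H), ⟪u, w⟫ = 0 := fun w hw => huMN w (hp'le hw)
    have hup'c : ∀ w ∈ LinearMap.range (p' : H →ₗ[ℂ] H), ⟪w, u⟫ = 0 := by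
      intro w hw
      rw [← inner_conj_symm, hup' w hw, map_zero]
    set U : Submodule ℂ H := ℂ ∙ u with hU
    haveI : FiniteDimensional ℂ ↥U := inferInstance
    set q : H →L[ℂ] H := U.subtypeL ∘L orthogonalProjection U with hq
    have hqsa : IsSelfAdjoint q := isSelfAdjoint_starProjection U
    have hqmem : ∀ v : H, q v ∈ U := fun v => (orthogonalProjection U v).2
    have hqU : ∀ v ∈ U, q v = v := by
      intro v hv
      show (orthogonalProjection U v : H) = v
      exact eq_starProjection_of_mem_orthogonal hv (by simp)
    have hq0 : ∀ v : H, ⟪u, v⟫ = 0 → q v = 0 := by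
      intro v hv
      show (orthogonalProjection U v : H) = 0
      rw [orthogonalProjection_mem_subspace_orthogonalComplement_eq_zero]
      · rfl
      · exact Submodule.mem_orthogonal_singleton_iff_inner_right.mpr hv
    have hqidem : q * q = q := by
      ext v
      exact hqU (q v) (hqmem v)
    -- x ⊥ range p'
    have hxp' : p' x = 0 := by
      apply apply_eq_zero_of_orth hp'sa hp'idem
      intro w hw
      rw [← inner_conj_symm]
      have hwMN := hp'le hw
      obtain ⟨m, hm, n, hn, rfl⟩ := Submodule.mem_sup.mp hwMN
      rw [inner_add_right, hM'x m hm, hN'x n hn, add_zero, map_zero]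
    have hup'v : ∀ v : H, p' v ∈ LinearMap.range (p' : H →ₗ[ℂ] H) := fun v => LinearMap.mem_range_self _ v
    set p : H →L[ℂ] H := p' + q with hp
    have hpsa : IsSelfAdjoint p := hp'sa.add hqsa
    have hp'q : ∀ v, p' (q v) = 0 := by
      intro v
      have hqv := hqmem v
      rw [hU] at hqv
      obtain ⟨cc, hcc⟩ := Submodule.mem_span_singleton.mp hqv
      have hpu : p' u = 0 := apply_eq_zero_of_orth hp'sa hp'idem hup'c
      rw [← hcc, map_smul, hpu, smul_zero]
    have hqp' : ∀ v, q (p' v) = 0 := fun v => hq0 _ (hup' _ (hup'v v))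
    have hpidem : p * p = p := by
      ext v
      have h1 := congrArg (fun f : H →L[ℂ] H => f v) hp'idem
      have h2 := congrArg (fun f : H →L[ℂ] H => f v) hqidem
      simp only [ContinuousLinearMap.mul_apply] at h1 h2
      simp only [hp, ContinuousLinearMap.mul_apply, ContinuousLinearMap.add_apply, map_add]
      rw [h1, h2, hp'q, hqp']
      abel
    -- range of p
    have hrange : LinearMap.range (p : H →ₗ[ℂ] H) = LinearMap.range (p' : H →ₗ[ℂ] H) ⊔ U := by
      apply le_antisymm
      · rintro _ ⟨v, rfl⟩
        exact Submodule.add_mem_sup (LinearMap.mem_range_self _ v) (hqmem v)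
      · apply sup_le
        · rintro _ ⟨v, rfl⟩
          refine ⟨p' v, ?_⟩
          have : p (p' v) = p' (p' v) + q (p' v) := rfl
          change p (p' v) = p' v
          rw [this, hqp', add_zero]
          have := congrArg (fun f : H →L[ℂ] H => f v) hp'idem
          simpa using this
        · rw [hU, Submodule.span_le, Set.singleton_subset_iff]
          refine ⟨u, ?_⟩
          have : p u = p' u + q u := rfl
          change p u = u
          rw [this, apply_eq_zero_of_orth hp'sa hp'idem hup'c, zero_add, hqU u
            (by rw [hU]; exact Submodule.mem_span_singleton_self u)]
    have hrankp : Module.finrank ℂ ↥(LinearMap.range (p : H →ₗ[ℂ] H)) = r + 1 := by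
      haveI : FiniteDimensional ℂ ↥(LinearMap.range (p' : H →ₗ[ℂ] H)) := by
        haveI : FiniteDimensional ℂ ↥(M' ⊔ N') := inferInstance
        exact Submodule.finiteDimensional_of_le hp'le
      have hdisj : LinearMap.range (p' : H →ₗ[ℂ] H) ⊓ U = ⊥ := by
        rw [eq_bot_iff]
        rintro z hz
        have hz1 : z ∈ LinearMap.range (p' : H →ₗ[ℂ] H) := hz.1
        have hz2 : z ∈ U := hz.2
        rw [hU] at hz2
        obtain ⟨cc, rfl⟩ := Submodule.mem_span_singleton.mp hz2
        have hthis := hup' _ hz1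
        rw [inner_smul_right] at hthis
        rcases mul_eq_zero.mp hthis with h | h
        · rw [h, zero_smul]; exact Submodule.zero_mem ⊥
        · exact absurd (inner_self_eq_zero.mp h) hu0
      have hd := Submodule.finrank_sup_add_finrank_inf_eq (LinearMap.range (p' : H →ₗ[ℂ] H)) U
      rw [hdisj, finrank_bot, add_zero, hp'rank, finrank_span_singleton hu0] at hd
      rw [hrange, hd]
    -- range p ≤ M ⊔ N
    have hple : LinearMap.range (p : H →ₗ[ℂ] H) ≤ M ⊔ N := by
      rw [hrange]
      apply sup_le
      · exact le_trans hp'le (sup_le_sup inf_le_left inf_le_left)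
      · rw [hU, Submodule.span_le, Set.singleton_subset_iff]
        exact Submodule.add_mem_sup hxM hyN
    -- the reflection maps M to N
    have hwapply : ∀ v : H, (2 • p - 1 : H →L[ℂ] H) v = 2 • p' v + 2 • q v - v := by
      intro v
      simp [hp, ContinuousLinearMap.sub_apply, ContinuousLinearMap.smul_apply,
        ContinuousLinearMap.add_apply, smul_add]
    have hyx : ⟪y, x⟫ = (c : ℂ) := by
      rw [← inner_conj_symm, hreal, Complex.conj_ofReal]
    have hqx : q x = (2⁻¹ : ℂ) • u := by
      show (orthogonalProjection U x : H) = (2⁻¹ : ℂ) • u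
      apply eq_starProjection_of_mem_orthogonal
      · rw [hU]
        exact Submodule.smul_mem _ _ (Submodule.mem_span_singleton_self u)
      · rw [Submodule.mem_orthogonal_singleton_iff_inner_right]
        rw [inner_sub_right, inner_smul_right, hu]
        rw [inner_add_left, inner_add_left, inner_add_right, inner_add_right,
          inner_self_eq_norm_sq_to_K, inner_self_eq_norm_sq_to_K, hx1, hy1, hreal, hyx]
        push_cast
        ring
    have hwx : (2 • p - 1 : H →L[ℂ] H) x = y := by
      rw [hwapply, hxp', hqx, hu]
      module
    have hwm : ∀ m ∈ M', (2 • p - 1 : H →L[ℂ] H) m = (2 • p' - 1 : H →L[ℂ] H) m := by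
      intro m hm
      rw [hwapply, hq0 m (huMN m (Submodule.mem_sup_left hm))]
      simp [ContinuousLinearMap.sub_apply, ContinuousLinearMap.smul_apply,
        ContinuousLinearMap.one_apply]
    have hmapM' : Submodule.map ((2 • p - 1 : H →L[ℂ] H) : H →ₗ[ℂ] H) M' = N' := by
      rw [← hp'map]
      ext z
      simp only [Submodule.mem_map]
      constructor
      · rintro ⟨m, hm, rfl⟩
        exact ⟨m, hm, (hwm m hm).symm⟩
      · rintro ⟨m, hm, rfl⟩
        exact ⟨m, hm, hwm m hm⟩
    have hmapM : Submodule.map ((2 • p - 1 : H →L[ℂ] H) : H →ₗ[ℂ] H) M = N := by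
      rw [← span_sup_orth M hxM hx1, Submodule.map_sup, hmapM',
        Submodule.map_span, Set.image_singleton, ContinuousLinearMap.coe_coe, hwx, hN']
      exact span_sup_orth N hyN hy1
    exact ⟨p, hpsa, hpidem, hple, hrankp, hmapM⟩

/-- Let `a, b ∈ L(H)` be projections of the same finite rank `r ≥ 1`.
Then there are finitely many rank-`r` projections `p₁, …, pₘ` such that the composition of
the Peirce reflections `x ↦ (2pᵢ - 1) x (2pᵢ - 1)` (applied successively for
`i = 1, …, m`) maps `a` to `b`; i.e. the group generated by Peirce reflections at rank-`r`
projections acts transitively on rank-`r` projections. -/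
theorem peirce_reflections_transitive (a b : H →L[ℂ] H) (r : ℕ) (hr : 1 ≤ r)
    (hasa : IsSelfAdjoint a) (haidem : a * a = a)
    (harank : Module.finrank ℂ (LinearMap.range (a : H →ₗ[ℂ] H)) = r)
    (hbsa : IsSelfAdjoint b) (hbidem : b * b = b)
    (hbrank : Module.finrank ℂ (LinearMap.range (b : H →ₗ[ℂ] H)) = r) :
    ∃ (m : ℕ) (p : Fin m → H →L[ℂ] H),
      (∀ i, IsSelfAdjoint (p i) ∧ p i * p i = p i ∧
        Module.finrank ℂ (LinearMap.range (p i : H →ₗ[ℂ] H)) = r) ∧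
      b = (List.finRange m).foldl
            (fun x i => (2 • p i - 1) * x * (2 • p i - 1)) a := by
  have hafin : FiniteDimensional ℂ ↥(LinearMap.range (a : H →ₗ[ℂ] H)) := by
    apply FiniteDimensional.of_finrank_pos
    rw [harank]; omega
  have hbfin : FiniteDimensional ℂ ↥(LinearMap.range (b : H →ₗ[ℂ] H)) := by
    apply FiniteDimensional.of_finrank_pos
    rw [hbrank]; omega
  obtain ⟨p, hpsa, hpidem, hple, hprank, hpmap⟩ :=
    key_induction r (LinearMap.range (a : H →ₗ[ℂ] H)) (LinearMap.range (b : H →ₗ[ℂ] H)) hafin hbfin harank hbrank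
  set w : H →L[ℂ] H := 2 • p - 1 with hw
  have hwsa : IsSelfAdjoint w := by
    rw [hw, two_smul]
    exact (hpsa.add hpsa).sub (IsSelfAdjoint.one _)
  have hww : w * w = 1 := by
    have h4 : w * w = 4 • (p * p) - 4 • p + 1 := by rw [hw]; noncomm_ring
    rw [h4, hpidem]
    abel
  have hwwv : ∀ t : H, w (w t) = t := by
    intro t
    have := congrArg (fun f : H →L[ℂ] H => f t) hww
    simpa using this
  have hwawsa : IsSelfAdjoint (w * a * w) := by
    have := hasa.conjugate w
    rwa [hwsa.star_eq] at this
  have hwawidem : (w * a * w) * (w * a * w) = w * a * w := by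
    calc (w * a * w) * (w * a * w) = w * (a * ((w * w) * (a * w))) := by
          simp only [mul_assoc]
      _ = w * (a * (a * w)) := by rw [hww, one_mul]
      _ = w * ((a * a) * w) := by rw [← mul_assoc a a w]
      _ = w * a * w := by rw [haidem, mul_assoc]
  have hrange : LinearMap.range ((w * a * w : H →L[ℂ] H) : H →ₗ[ℂ] H) = LinearMap.range (b : H →ₗ[ℂ] H) := by
    rw [← hpmap]
    apply le_antisymm
    · rintro _ ⟨v, rfl⟩
      have : (w * a * w) v = w (a (w v)) := rfl
      rw [ContinuousLinearMap.coe_coe, this]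
      exact Submodule.mem_map_of_mem (LinearMap.mem_range_self _ (w v))
    · rintro _ ⟨_, ⟨v, rfl⟩, rfl⟩
      refine ⟨w v, ?_⟩
      show w (a (w (w v))) = w (a v)
      rw [hwwv]
  have hbw : b = w * a * w := proj_unique hbsa hbidem hwawsa hwawidem hrange.symm
  refine ⟨1, fun _ => p, fun i => ⟨hpsa, hpidem, hprank⟩, ?_⟩
  have hfr : (List.finRange 1) = [(0 : Fin 1)] := rfl
  rw [hfr]
  simpa [hw] using hbw
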